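/- Let C be the middle-thirds Cantor set realized as the sum set with s_n = 2·3^{-n} and 𝒟^n = {0,1}, and d = ln 2 / ln 3. If (t_n) is obtained from (s_n) by removing exactly K terms, then ℋ^d(C_{t,𝒟}) = 2^{-K}·ℋ^d(C). In particular no subsequence (t_n) of (s_n) satisfies ℋ^d(C_{t,𝒟}) = ℋ^d(C)/3. -/

import Mathlib

open MeasureTheory
open scoped ENNReal

open MeasureTheory Set Filter Topology
open scoped ENNReal NNReal Classical

namespace Stmt19

noncomputable def dd : ℝ := Real.log 2 / Real.log 3

noncomputable def Phi (c : ℕ → ℝ) (A : Set ℕ) : ℝ := ∑' n, A.indicator c n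

noncomputable def c3 (n : ℕ) : ℝ := 2 / 3 ^ (n + 1)
noncomputable def c2 (n : ℕ) : ℝ := 1 / 2 ^ (n + 1)

lemma c3_nonneg (n : ℕ) : 0 ≤ c3 n := by unfold c3; positivity
lemma c2_nonneg (n : ℕ) : 0 ≤ c2 n := by unfold c2; positivity

lemma summable_c3 : Summable c3 := by
  have : Summable (fun n : ℕ => (2/3 : ℝ) * (1/3)^n) :=
    (summable_geometric_of_lt_one (by norm_num) (by norm_num)).mul_left _
  refine this.congr fun n => ?_
  simp only [c3]
  rw [pow_succ]
  field_simp
  rw [← mul_pow]; norm_num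

lemma summable_c2 : Summable c2 := by
  have : Summable (fun n : ℕ => (1/2 : ℝ) * (1/2)^n) :=
    (summable_geometric_of_lt_one (by norm_num) (by norm_num)).mul_left _
  refine this.congr fun n => ?_
  simp only [c2]
  rw [pow_succ]
  field_simp
  rw [← mul_pow]; norm_num

lemma summable_ind {c : ℕ → ℝ} (hc : Summable c) (A : Set ℕ) :
    Summable (A.indicator c) :=
  hc.indicator A

lemma tail_c3 (n : ℕ) : ∑' k, c3 (k + n) = 1 / 3 ^ n := by
  have h : ∀ k, c3 (k + n) = (2 / 3 ^ (n+1)) * (1/3)^k := by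
    intro k
    simp only [c3]
    rw [pow_add, pow_succ, one_div_pow]
    field_simp
    ring
  rw [tsum_congr h, tsum_mul_left, tsum_geometric_of_lt_one (by norm_num) (by norm_num)]
  rw [pow_succ]
  norm_num
  field_simp

lemma tail_c2 (n : ℕ) : ∑' k, c2 (k + n) = 1 / 2 ^ n := by
  have h : ∀ k, c2 (k + n) = (1 / 2 ^ (n+1)) * (1/2)^k := by
    intro k
    simp only [c2]
    rw [pow_add, pow_succ, one_div_pow]
    field_simp
    ring
  rw [tsum_congr h, tsum_mul_left, tsum_geometric_of_lt_one (by norm_num) (by norm_num)]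
  rw [pow_succ]
  field_simp
  ring



variable {c : ℕ → ℝ} {A B : Set ℕ} {n : ℕ}

lemma abs_ind_sub_le (h0 : ∀ k, 0 ≤ c k) (k : ℕ) :
    |A.indicator c k - B.indicator c k| ≤ c k := by
  rcases em (k ∈ A) with hA | hA <;> rcases em (k ∈ B) with hB | hB <;>
    simp [Set.indicator_of_mem, Set.indicator_of_notMem, hA, hB, abs_le, h0 k,
      neg_le_self (h0 k), le_refl]

lemma summable_shift (hc : Summable c) (m : ℕ) : Summable (fun k => c (k + m)) :=
  hc.comp_injective (add_left_injective m)

lemma summable_abs_ind (hc : Summable c) (h0 : ∀ k, 0 ≤ c k) (m : ℕ) :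
    Summable (fun k => |A.indicator c (k + m) - B.indicator c (k + m)|) :=
  (summable_shift hc m).of_nonneg_of_le (fun _ => abs_nonneg _)
    (fun k => abs_ind_sub_le h0 (k + m))

lemma tail_abs_le (hc : Summable c) (h0 : ∀ k, 0 ≤ c k) (m : ℕ) :
    |∑' k, (A.indicator c (k + m) - B.indicator c (k + m))| ≤ ∑' k, c (k + m) := by
  calc |∑' k, (A.indicator c (k + m) - B.indicator c (k + m))|
      ≤ ∑' k, |A.indicator c (k + m) - B.indicator c (k + m)| := by
        simpa [Real.norm_eq_abs] using
          norm_tsum_le_tsum_norm (f := fun k => A.indicator c (k + m) - B.indicator c (k + m))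
            (by simpa [Real.norm_eq_abs] using summable_abs_ind (A := A) (B := B) hc h0 m)
    _ ≤ ∑' k, c (k + m) :=
        Summable.tsum_le_tsum (fun k => abs_ind_sub_le h0 (k + m)) (summable_abs_ind hc h0 m)
          (summable_shift hc m)

lemma ind_sub_zero (hiff : n ∈ A ↔ n ∈ B) : A.indicator c n - B.indicator c n = 0 := by
  rcases em (n ∈ A) with h | h
  · rw [Set.indicator_of_mem h, Set.indicator_of_mem (hiff.mp h), sub_self]
  · rw [Set.indicator_of_notMem h, Set.indicator_of_notMem (fun hb => h (hiff.mpr hb)), sub_self]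

lemma phi_diff_upper (hc : Summable c) (h0 : ∀ k, 0 ≤ c k)
    (hagree : ∀ k < n, (k ∈ A ↔ k ∈ B)) :
    |∑' k, A.indicator c k - ∑' k, B.indicator c k| ≤ ∑' k, c (k + n) := by
  have hD : Summable (fun k => A.indicator c k - B.indicator c k) :=
    (hc.indicator A).sub (hc.indicator B)
  rw [← Summable.tsum_sub (hc.indicator A) (hc.indicator B)]
  have hsplit := Summable.sum_add_tsum_nat_add (f := fun k => A.indicator c k - B.indicator c k) n hD
  rw [← hsplit, Finset.sum_eq_zero
    (fun i hi => ind_sub_zero (hagree i (Finset.mem_range.mp hi))), zero_add]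
  exact tail_abs_le hc h0 n

lemma phi_diff_lower (hc : Summable c) (h0 : ∀ k, 0 ≤ c k)
    (hagree : ∀ k < n, (k ∈ A ↔ k ∈ B)) (hA : n ∈ A) (hB : n ∉ B) :
    c n - ∑' k, c (k + (n+1)) ≤ ∑' k, A.indicator c k - ∑' k, B.indicator c k := by
  have hD : Summable (fun k => A.indicator c k - B.indicator c k) :=
    (hc.indicator A).sub (hc.indicator B)
  rw [← Summable.tsum_sub (hc.indicator A) (hc.indicator B)]
  have hsplit := Summable.sum_add_tsum_nat_add (f := fun k => A.indicator c k - B.indicator c k) (n+1) hD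
  have hsum : ∑ i ∈ Finset.range (n+1), (A.indicator c i - B.indicator c i) = c n := by
    rw [Finset.sum_eq_single n]
    · rw [Set.indicator_of_mem hA, Set.indicator_of_notMem hB, sub_zero]
    · intro i hi hne
      exact ind_sub_zero (hagree i (lt_of_le_of_ne (Nat.lt_succ_iff.mp (Finset.mem_range.mp hi)) hne))
    · intro h; exact absurd (Finset.self_mem_range_succ n) h
  have htail := tail_abs_le (A := A) (B := B) hc h0 (n+1)
  have := neg_abs_le (∑' k, (A.indicator c (k + (n+1)) - B.indicator c (k + (n+1))))
  rw [← hsplit, hsum]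
  linarith

lemma exists_least_diff (h : A ≠ B) :
    ∃ n, (∀ k < n, (k ∈ A ↔ k ∈ B)) ∧ ¬(n ∈ A ↔ n ∈ B) := by
  have hex : ∃ n, ¬(n ∈ A ↔ n ∈ B) := by
    by_contra hc
    push_neg at hc
    exact h (Set.ext fun n => hc n)
  exact ⟨Nat.find hex, fun k hk => not_not.mp (Nat.find_min hex hk), Nat.find_spec hex⟩





lemma log2_pos : (0:ℝ) < Real.log 2 := Real.log_pos (by norm_num)
lemma log3_pos : (0:ℝ) < Real.log 3 := Real.log_pos (by norm_num)

lemma dd_pos : 0 < dd := div_pos log2_pos log3_pos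
lemma dd_nonneg : 0 ≤ dd := dd_pos.le

lemma three_rpow_dd : (3:ℝ) ^ dd = 2 := by
  rw [dd, Real.rpow_def_of_pos (by norm_num : (0:ℝ) < 3), mul_comm,
    div_mul_cancel₀ _ (ne_of_gt log3_pos)]
  exact Real.exp_log (by norm_num)

lemma rpow_pow3 (m : ℕ) : ((1 / 3 ^ m : ℝ)) ^ dd = 1 / 2 ^ m := by
  have h3 : (1 / 3 ^ m : ℝ) = (3:ℝ) ^ (-(m:ℝ)) := by
    rw [Real.rpow_neg (by norm_num), Real.rpow_natCast, one_div]
  have h2 : (1 / 2 ^ m : ℝ) = (2:ℝ) ^ (-(m:ℝ)) := by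
    rw [Real.rpow_neg (by norm_num), Real.rpow_natCast, one_div]
  rw [h3, h2, ← Real.rpow_mul (by norm_num : (0:ℝ) ≤ 3), mul_comm,
    Real.rpow_mul (by norm_num : (0:ℝ) ≤ 3), three_rpow_dd]


noncomputable def Phi3 (A : Set ℕ) : ℝ := ∑' k, A.indicator c3 k
noncomputable def Phi2 (A : Set ℕ) : ℝ := ∑' k, A.indicator c2 k

lemma phi3_sub_lower {A B : Set ℕ} {n : ℕ} (hagree : ∀ k < n, (k ∈ A ↔ k ∈ B))
    (hA : n ∈ A) (hB : n ∉ B) : 1 / 3 ^ (n+1) ≤ Phi3 A - Phi3 B := by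
  have h := phi_diff_lower summable_c3 c3_nonneg hagree hA hB
  rw [tail_c3 (n+1)] at h
  have he : c3 n - 1 / 3 ^ (n+1) = 1 / 3 ^ (n+1) := by unfold c3; ring
  unfold Phi3
  linarith

lemma phi3_abs_lower {A B : Set ℕ} (h : A ≠ B) :
    ∃ n, (∀ k < n, (k ∈ A ↔ k ∈ B)) ∧ 1 / 3 ^ (n+1) ≤ |Phi3 A - Phi3 B| := by
  obtain ⟨n, hagree, hdiff⟩ := exists_least_diff h
  refine ⟨n, hagree, ?_⟩
  rcases em (n ∈ A) with hA | hA
  · have hB : n ∉ B := fun hB => hdiff ⟨fun _ => hB, fun _ => hA⟩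
    exact le_trans (phi3_sub_lower hagree hA hB) (le_abs_self _)
  · have hB : n ∈ B := by
      by_contra hB
      exact hdiff ⟨fun h' => absurd h' hA, fun h' => absurd h' hB⟩
    have := phi3_sub_lower (fun k hk => (hagree k hk).symm) hB hA
    rw [abs_sub_comm]
    exact le_trans this (le_abs_self _)

lemma phi3_inj : Function.Injective Phi3 := by
  intro A B hEq
  by_contra h
  obtain ⟨n, _, hlow⟩ := phi3_abs_lower h
  rw [hEq, sub_self, abs_zero] at hlow
  have : (0:ℝ) < 1 / 3 ^ (n+1) := by positivity
  linarith

lemma holder_key (A B : Set ℕ) : |Phi2 A - Phi2 B| ≤ 2 * |Phi3 A - Phi3 B| ^ dd := by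
  rcases em (A = B) with rfl | hne
  · simp [Real.zero_rpow (ne_of_gt dd_pos)]
  · obtain ⟨n, hagree, hlow3⟩ := phi3_abs_lower hne
    have hup2 : |Phi2 A - Phi2 B| ≤ 1 / 2 ^ n := by
      have := phi_diff_upper (A := A) (B := B) summable_c2 c2_nonneg hagree
      rw [tail_c2 n] at this
      exact this
    have hr : (1 / 3 ^ (n+1) : ℝ) ^ dd ≤ |Phi3 A - Phi3 B| ^ dd :=
      Real.rpow_le_rpow (by positivity) hlow3 dd_nonneg
    rw [rpow_pow3 (n+1)] at hr
    have : (1 / 2 ^ n : ℝ) = 2 * (1 / 2 ^ (n+1)) := by ring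
    calc |Phi2 A - Phi2 B| ≤ 1 / 2 ^ n := hup2
      _ = 2 * (1 / 2 ^ (n+1)) := this
      _ ≤ 2 * |Phi3 A - Phi3 B| ^ dd := by linarith


-- ### Reindexing and range lemmas

lemma tsum_sel_eq (c : ℕ → ℝ) {g : ℕ → ℕ} (hg : Function.Injective g) (ε : ℕ → Bool) :
    ∑' n, (if ε n then c (g n) else 0) = ∑' k, (g '' {n | ε n = true}).indicator c k := by
  rw [← Function.Injective.tsum_eq hg
    (f := (g '' {n | ε n = true}).indicator c)
    (Set.support_indicator_subset.trans (Set.image_subset_range g _))]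
  refine tsum_congr fun n => ?_
  rcases h : ε n with hf | ht
  · rw [if_neg (by simp [h]), Set.indicator_of_notMem]
    intro hmem
    obtain ⟨m, hm, hgm⟩ := hmem
    rw [hg hgm] at hm
    simp [h] at hm
  · rw [if_pos rfl, Set.indicator_of_mem]
    exact ⟨n, by simp [h], rfl⟩

lemma range_sel (c : ℕ → ℝ) {g : ℕ → ℕ} (hg : Function.Injective g) :
    (Set.range fun ε : ℕ → Bool => ∑' n, if ε n then c (g n) else 0)
      = (fun A : Set ℕ => ∑' k, A.indicator c k) '' {A : Set ℕ | A ⊆ Set.range g} := by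
  ext x
  constructor
  · rintro ⟨ε, rfl⟩
    exact ⟨g '' {n | ε n = true}, Set.image_subset_range g _, (tsum_sel_eq c hg ε).symm⟩
  · rintro ⟨A, hA, rfl⟩
    refine ⟨fun n => decide (g n ∈ A), ?_⟩
    show (∑' n, if (decide (g n ∈ A)) then c (g n) else 0) = _
    rw [tsum_sel_eq c hg]
    have hset : g '' {n | decide (g n ∈ A) = true} = A := by
      ext k
      constructor
      · rintro ⟨m, hm, rfl⟩
        simpa using hm
      · intro hk
        obtain ⟨m, rfl⟩ := hA hk
        exact ⟨m, by simpa using hk, rfl⟩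
    rw [hset]

lemma stmt_set_eq {g : ℕ → ℕ} (hg : Function.Injective g) :
    (Set.range fun ε : ℕ → Bool => ∑' n : ℕ, if ε n then (2 / 3 ^ (g n + 1) : ℝ) else 0)
      = Phi3 '' {A : Set ℕ | A ⊆ Set.range g} := by
  have h := range_sel c3 hg
  simp only [c3] at h
  exact h

lemma stmt_set_eq_id :
    (Set.range fun ε : ℕ → Bool => ∑' n : ℕ, if ε n then (2 / 3 ^ (n + 1) : ℝ) else 0)
      = Phi3 '' Set.univ := by
  have h := stmt_set_eq Function.injective_id
  simpa [Set.range_id, Set.subset_univ, Set.setOf_true] using h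

-- ### Compactness

lemma isCompact_range_sel (c : ℕ → ℝ) (hc : Summable c) (h0 : ∀ n, 0 ≤ c n) :
    IsCompact (Set.range fun ε : ℕ → Bool => ∑' n, if ε n then c n else 0) := by
  apply isCompact_range
  apply continuous_tsum (u := c) (f := fun n (ε : ℕ → Bool) => if ε n then c n else 0)
    (fun i => Continuous.comp (continuous_of_discreteTopology
      (f := fun b : Bool => if b then c i else 0)) (continuous_apply i)) hc
  intro n ε
  rcases h : ε n with _ | _ <;> simp [h, Real.norm_eq_abs, abs_of_nonneg (h0 n), h0 n]


-- ### Basic Phi3 lemmas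

open Pointwise

lemma Phi3_nonneg (A : Set ℕ) : 0 ≤ Phi3 A :=
  tsum_nonneg fun k => Set.indicator_nonneg (fun i _ => c3_nonneg i) k

lemma Phi3_union {A B : Set ℕ} (hd : Disjoint A B) : Phi3 (A ∪ B) = Phi3 A + Phi3 B := by
  unfold Phi3
  rw [← Summable.tsum_add (summable_c3.indicator A) (summable_c3.indicator B)]
  exact tsum_congr fun k => by rw [Set.indicator_union_of_disjoint hd]

lemma Phi3_finset (s : Finset ℕ) : Phi3 ↑s = ∑ i ∈ s, c3 i := by
  unfold Phi3
  rw [tsum_eq_sum (s := s) (fun b hb => Set.indicator_of_notMem (by simpa using hb) c3)]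
  exact Finset.sum_congr rfl fun i hi => Set.indicator_of_mem (by simpa using hi) c3

lemma Phi3_tail_le {B : Set ℕ} {n : ℕ} (hB : ∀ k ∈ B, n ≤ k) : Phi3 B ≤ 1 / 3 ^ n := by
  have h := phi_diff_upper (A := B) (B := ∅) (n := n) summable_c3 c3_nonneg
    (fun k hk => ⟨fun hkB => absurd (hB k hkB) (by omega), fun h' => absurd h' (Set.notMem_empty k)⟩)
  rw [tail_c3 n] at h
  have he : ∑' (k : ℕ), (∅ : Set ℕ).indicator c3 k = 0 := by simp
  rw [he] at h
  have h0 := le_abs_self (∑' (k : ℕ), B.indicator c3 k - 0)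
  show ∑' (k : ℕ), B.indicator c3 k ≤ 1 / 3 ^ n
  rw [sub_zero] at h0 h
  linarith

-- ### Part 1 decomposition

lemma isCompact_Ct {g : ℕ → ℕ} (hg : Function.Injective g) :
    IsCompact (Phi3 '' {A : Set ℕ | A ⊆ Set.range g}) := by
  show IsCompact ((fun A : Set ℕ => ∑' k, A.indicator c3 k) '' {A : Set ℕ | A ⊆ Set.range g})
  rw [← range_sel c3 hg]
  exact isCompact_range_sel (fun n => c3 (g n)) (summable_c3.comp_injective hg)
    (fun n => c3_nonneg _)

lemma decomp {π : ℕ → ℕ} (hfin : (Set.range π)ᶜ.Finite) :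
    Phi3 '' Set.univ
      = ⋃ s ∈ hfin.toFinset.powerset,
          ((∑ i ∈ s, c3 i) +ᵥ (Phi3 '' {A : Set ℕ | A ⊆ Set.range π})) := by
  ext x
  simp only [Set.mem_iUnion, Finset.mem_powerset]
  constructor
  · rintro ⟨A, -, rfl⟩
    set s := hfin.toFinset.filter (· ∈ A) with hs_def
    have hs_sub : s ⊆ hfin.toFinset := Finset.filter_subset _ _
    have hscoe : (↑s : Set ℕ) = A ∩ (Set.range π)ᶜ := by
      ext i
      simp only [hs_def, Finset.coe_filter, Set.mem_setOf_eq, Set.Finite.mem_toFinset,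
        Set.mem_inter_iff, Set.mem_compl_iff]
      tauto
    have hAeq : A ∩ (Set.range π)ᶜ ∪ A ∩ Set.range π = A := by
      rw [← Set.inter_union_distrib_left, Set.compl_union_self, Set.inter_univ]
    have hdisj : Disjoint (A ∩ (Set.range π)ᶜ) (A ∩ Set.range π) :=
      (disjoint_compl_left (a := Set.range π)).mono Set.inter_subset_right Set.inter_subset_right
    have hsplit : Phi3 A = (∑ i ∈ s, c3 i) + Phi3 (A ∩ Set.range π) := by
      conv_lhs => rw [← hAeq]
      rw [Phi3_union hdisj, ← hscoe, Phi3_finset]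
    refine ⟨s, hs_sub, ?_⟩
    rw [← Set.image_vadd]
    refine ⟨Phi3 (A ∩ Set.range π), ⟨A ∩ Set.range π, Set.inter_subset_right, rfl⟩, ?_⟩
    simp only [vadd_eq_add]
    linarith [hsplit]
  · rintro ⟨s, hs, hx⟩
    rw [← Set.image_vadd] at hx
    obtain ⟨y, ⟨B, hB, rfl⟩, rfl⟩ := hx
    have hsR : (↑s : Set ℕ) ⊆ (Set.range π)ᶜ := fun i hi =>
      hfin.mem_toFinset.mp (hs (Finset.mem_coe.mp hi))
    have hdisj : Disjoint (↑s : Set ℕ) B :=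
      ((disjoint_compl_left (a := Set.range π)).mono_left hsR).mono_right hB
    refine ⟨↑s ∪ B, Set.mem_univ _, ?_⟩
    rw [Phi3_union hdisj, Phi3_finset]
    simp [vadd_eq_add]

lemma decomp_disj {π : ℕ → ℕ} (hfin : (Set.range π)ᶜ.Finite) :
    Set.PairwiseDisjoint (↑hfin.toFinset.powerset : Set (Finset ℕ))
      (fun s : Finset ℕ => ((∑ i ∈ s, c3 i) +ᵥ (Phi3 '' {A : Set ℕ | A ⊆ Set.range π}))) := by
  intro s hs s' hs' hne
  simp only [Finset.coe_powerset, Set.mem_preimage, Set.mem_powerset_iff] at hs hs'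
  rw [Function.onFun, Set.disjoint_left]
  intro z hz hz'
  rw [← Set.image_vadd] at hz hz'
  obtain ⟨y, ⟨B, hB, rfl⟩, hzy⟩ := hz
  obtain ⟨y', ⟨B', hB', rfl⟩, hzy'⟩ := hz'
  have hsR : (↑s : Set ℕ) ⊆ (Set.range π)ᶜ := fun i hi =>
    hfin.mem_toFinset.mp (hs (Finset.mem_coe.mp hi))
  have hsR' : (↑s' : Set ℕ) ⊆ (Set.range π)ᶜ := fun i hi =>
    hfin.mem_toFinset.mp (hs' (Finset.mem_coe.mp hi))
  have hd : Disjoint (↑s : Set ℕ) B :=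
    ((disjoint_compl_left (a := Set.range π)).mono_left hsR).mono_right hB
  have hd' : Disjoint (↑s' : Set ℕ) B' :=
    ((disjoint_compl_left (a := Set.range π)).mono_left hsR').mono_right hB'
  have hkey : Phi3 (↑s ∪ B) = Phi3 (↑s' ∪ B') := by
    rw [Phi3_union hd, Phi3_union hd', Phi3_finset, Phi3_finset]
    simp only [vadd_eq_add] at hzy hzy'
    linarith [hzy, hzy']
  have hsets := phi3_inj hkey
  apply hne
  ext i
  constructor
  · intro hi
    have hiU : i ∈ (↑s' : Set ℕ) ∪ B' := by
      rw [← hsets]; exact Or.inl (Finset.mem_coe.mpr hi)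
    rcases hiU with h' | h'
    · exact Finset.mem_coe.mp h'
    · exact absurd (hB' h') (hsR (Finset.mem_coe.mpr hi))
  · intro hi
    have hiU : i ∈ (↑s : Set ℕ) ∪ B := by
      rw [hsets]; exact Or.inl (Finset.mem_coe.mpr hi)
    rcases hiU with h' | h'
    · exact Finset.mem_coe.mp h'
    · exact absurd (hB h') (hsR' (Finset.mem_coe.mpr hi))

-- ### Part 1: the measure identity

lemma part1_phi {π : ℕ → ℕ} (hπ : StrictMono π) (hfin : (Set.range π)ᶜ.Finite) :
    μH[dd] (Phi3 '' {A : Set ℕ | A ⊆ Set.range π})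
      = (2 : ℝ≥0∞)⁻¹ ^ (Set.range π)ᶜ.ncard * μH[dd] (Phi3 '' Set.univ) := by
  have hK : hfin.toFinset.card = (Set.range π)ᶜ.ncard :=
    (Set.ncard_eq_toFinset_card _ hfin).symm
  have hmeas : ∀ s : Finset ℕ,
      MeasurableSet ((∑ i ∈ s, c3 i) +ᵥ (Phi3 '' {A : Set ℕ | A ⊆ Set.range π})) := by
    intro s
    rw [← Set.image_vadd]
    have hcont : Continuous (fun x : ℝ => (∑ i ∈ s, c3 i) +ᵥ x) := by
      simpa [vadd_eq_add] using continuous_add_left (∑ i ∈ s, c3 i)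
    exact (((isCompact_Ct hπ.injective).image hcont).isClosed).measurableSet
  have hmain : μH[dd] (Phi3 '' Set.univ)
      = 2 ^ (Set.range π)ᶜ.ncard * μH[dd] (Phi3 '' {A : Set ℕ | A ⊆ Set.range π}) := by
    rw [decomp hfin, measure_biUnion_finset (decomp_disj hfin) (fun s _ => hmeas s)]
    rw [Finset.sum_congr rfl (fun s _ =>
      hausdorffMeasure_vadd (∑ i ∈ s, c3 i) (Or.inl dd_nonneg)
        (Phi3 '' {A : Set ℕ | A ⊆ Set.range π})),
      Finset.sum_const, Finset.card_powerset, hK, nsmul_eq_mul]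
    norm_cast
  rw [hmain, ← mul_assoc, ← mul_pow, ENNReal.inv_mul_cancel two_ne_zero ENNReal.ofNat_ne_top,
    one_pow, one_mul]

lemma part1 (K : ℕ) (π : ℕ → ℕ) (hπ : StrictMono π)
    (hfin : (Set.range π)ᶜ.Finite) (hcard : (Set.range π)ᶜ.ncard = K) :
    μH[dd] (Set.range fun ε : ℕ → Bool =>
        ∑' n : ℕ, if ε n then (2 / 3 ^ (π n + 1) : ℝ) else 0)
      = (2 : ℝ≥0∞)⁻¹ ^ K *
        μH[dd] (Set.range fun ε : ℕ → Bool =>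
          ∑' n : ℕ, if ε n then (2 / 3 ^ (n + 1) : ℝ) else 0) := by
  rw [stmt_set_eq hπ.injective, stmt_set_eq_id, ← hcard]
  exact part1_phi hπ hfin

-- ### Upper bound: μH[dd] C ≤ 1

lemma upper_bound : μH[dd] (Phi3 '' Set.univ) ≤ 1 := by
  set t : ℕ → Finset ℕ → Set ℝ := fun n s =>
    if s ⊆ Finset.range n then Set.Icc (∑ i ∈ s, c3 i) (∑ i ∈ s, c3 i + 1/3^n) else ∅
    with ht_def
  set r : ℕ → ℝ≥0∞ := fun n => ENNReal.ofReal ((1/3 : ℝ)^n) with hr_def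
  have hr : Filter.Tendsto r Filter.atTop (nhds 0) := by
    rw [hr_def]
    have : Filter.Tendsto (fun n : ℕ => (1/3 : ℝ)^n) Filter.atTop (nhds 0) :=
      tendsto_pow_atTop_nhds_zero_of_lt_one (by norm_num) (by norm_num)
    have h := (ENNReal.continuous_ofReal.tendsto 0).comp this
    rw [ENNReal.ofReal_zero] at h
    exact h
  have ht : ∀ n, ∀ s : Finset ℕ, Metric.ediam (t n s) ≤ r n := by
    intro n s
    rw [ht_def, hr_def]
    by_cases hsub : s ⊆ Finset.range n
    · simp only [if_pos hsub]
      rw [Real.ediam_Icc]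
      apply ENNReal.ofReal_le_ofReal
      rw [add_sub_cancel_left, one_div_pow]
    · simp [if_neg hsub]
  have hst : ∀ n, Phi3 '' Set.univ ⊆ ⋃ s : Finset ℕ, t n s := by
    intro n x hx
    obtain ⟨A, -, rfl⟩ := hx
    set s := (Finset.range n).filter (· ∈ A) with hs_def
    have hs_sub : s ⊆ Finset.range n := Finset.filter_subset _ _
    have hscoe : (↑s : Set ℕ) = A ∩ {k : ℕ | k < n} := by
      ext i
      simp only [hs_def, Finset.coe_filter, Set.mem_setOf_eq, Finset.mem_range,
        Set.mem_inter_iff]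
      tauto
    have hAeq : A ∩ {k : ℕ | k < n} ∪ A ∩ {k : ℕ | k < n}ᶜ = A := by
      rw [← Set.inter_union_distrib_left, Set.union_compl_self, Set.inter_univ]
    have hdisj : Disjoint (A ∩ {k : ℕ | k < n}) (A ∩ {k : ℕ | k < n}ᶜ) :=
      (disjoint_compl_right (a := {k : ℕ | k < n})).mono Set.inter_subset_right
        Set.inter_subset_right
    have hsplit : Phi3 A = (∑ i ∈ s, c3 i) + Phi3 (A ∩ {k : ℕ | k < n}ᶜ) := by
      conv_lhs => rw [← hAeq]
      rw [Phi3_union hdisj, ← hscoe, Phi3_finset]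
    have htail0 : 0 ≤ Phi3 (A ∩ {k : ℕ | k < n}ᶜ) := Phi3_nonneg _
    have htail1 : Phi3 (A ∩ {k : ℕ | k < n}ᶜ) ≤ 1/3^n :=
      Phi3_tail_le fun k hk => by
        have := hk.2
        simp only [Set.mem_compl_iff, Set.mem_setOf_eq, not_lt] at this
        exact this
    refine Set.mem_iUnion.mpr ⟨s, ?_⟩
    rw [ht_def]
    simp only [if_pos hs_sub]
    exact ⟨by linarith, by linarith⟩
  have hsum : ∀ n, (∑' s : Finset ℕ, Metric.ediam (t n s) ^ dd) = 1 := by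
    intro n
    rw [tsum_eq_sum (s := (Finset.range n).powerset) ?_]
    · have hterm : ∀ s ∈ (Finset.range n).powerset,
          Metric.ediam (t n s) ^ dd = ENNReal.ofReal (1/2^n) := by
        intro s hs
        rw [ht_def]
        simp only [if_pos (Finset.mem_powerset.mp hs)]
        rw [Real.ediam_Icc, add_sub_cancel_left,
          ENNReal.ofReal_rpow_of_pos (by positivity), rpow_pow3]
      rw [Finset.sum_congr rfl hterm, Finset.sum_const, Finset.card_powerset,
        Finset.card_range, nsmul_eq_mul]
      rw [← ENNReal.ofReal_natCast (2^n), ← ENNReal.ofReal_mul (by positivity)]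
      norm_num
    · intro s hs
      have hnsub : ¬ s ⊆ Finset.range n := by
        simpa [Finset.mem_powerset] using hs
      rw [ht_def]
      simp only [if_neg hnsub, Metric.ediam_empty]
      exact ENNReal.zero_rpow_of_pos dd_pos
  calc μH[dd] (Phi3 '' Set.univ)
      ≤ Filter.liminf (fun n => ∑' s : Finset ℕ, Metric.ediam (t n s) ^ dd) Filter.atTop :=
        MeasureTheory.Measure.hausdorffMeasure_le_liminf_tsum dd (Phi3 '' Set.univ) r hr t
          (Filter.Eventually.of_forall ht) (Filter.Eventually.of_forall hst)
    _ = 1 := by simp only [hsum]; exact Filter.liminf_const 1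

-- ### Lower bound: μH[dd] C ≠ 0

lemma binary_sum : ∀ n : ℕ, ∀ k < 2^n, ∑ j ∈ Finset.range n, ((k.testBit j).toNat * 2^j) = k := by
  intro n
  induction n with
  | zero => intro k hk; interval_cases k; simp
  | succ n ih =>
    intro k hk
    rw [Finset.sum_range_succ']
    have h0 : ((k.testBit 0).toNat * 2^0) = k % 2 := by
      rw [Nat.testBit_zero]
      rcases Nat.mod_two_eq_zero_or_one k with h | h <;> simp [h]
    have hdiv : k / 2 < 2^n := by
      have h2 : 2^(n+1) = 2^n * 2 := pow_succ 2 n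
      omega
    have ihh := ih (k/2) hdiv
    have hstep : ∑ j ∈ Finset.range n, ((k.testBit (j+1)).toNat * 2^(j+1))
        = 2 * ∑ j ∈ Finset.range n, (((k/2).testBit j).toNat * 2^j) := by
      rw [Finset.mul_sum]
      refine Finset.sum_congr rfl fun j _ => ?_
      rw [Nat.testBit_succ]
      ring
    rw [hstep, ihh, h0]
    omega

lemma Phi2_dyadic (n k : ℕ) (hk : k < 2^n) : ((k : ℝ)/2^n) ∈ Phi2 '' Set.univ := by
  refine ⟨{i : ℕ | i < n ∧ (k.testBit (n-1-i)) = true}, Set.mem_univ _, ?_⟩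
  set G : ℕ → ℝ := fun j => ((k.testBit j).toNat : ℝ) * 2^j with hG_def
  have hGsum : ∑ j ∈ Finset.range n, G j = (k : ℝ) := by
    have h := binary_sum n k hk
    calc ∑ j ∈ Finset.range n, G j
        = ((∑ j ∈ Finset.range n, (k.testBit j).toNat * 2^j : ℕ) : ℝ) := by
          push_cast [hG_def]; rfl
      _ = k := by rw [h]
  show Phi2 _ = _
  unfold Phi2
  have hout : ∀ b ∉ Finset.range n,
      ({i : ℕ | i < n ∧ (k.testBit (n-1-i)) = true}).indicator c2 b = 0 := by
    intro b hb
    apply Set.indicator_of_notMem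
    simp only [Set.mem_setOf_eq, not_and]
    intro hbn
    exact absurd hbn (by simpa using hb)
  rw [tsum_eq_sum (s := Finset.range n) hout]
  have hterm : ∀ i ∈ Finset.range n,
      ({i : ℕ | i < n ∧ (k.testBit (n-1-i)) = true}).indicator c2 i = G (n-1-i) / 2^n := by
    intro i hi
    have hin : i < n := Finset.mem_range.mp hi
    rcases hbit : k.testBit (n-1-i) with _ | _
    · rw [Set.indicator_of_notMem (by simp [hbit, hin])]
      simp [hG_def, hbit]
    · rw [Set.indicator_of_mem (by simp [hbit, hin])]
      have hexp : (n-1-i) + (i+1) = n := by omega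
      show c2 i = G (n-1-i) / 2^n
      rw [hG_def]
      simp only [hbit, Bool.toNat_true, Nat.cast_one, one_mul]
      unfold c2
      rw [div_eq_div_iff (by positivity) (by positivity), one_mul, ← pow_add, hexp]
  calc ∑ i ∈ Finset.range n, ({i : ℕ | i < n ∧ (k.testBit (n-1-i)) = true}).indicator c2 i
      = ∑ i ∈ Finset.range n, G (n-1-i) / 2^n := Finset.sum_congr rfl hterm
    _ = (∑ i ∈ Finset.range n, G (n-1-i)) / 2^n := by rw [Finset.sum_div]
    _ = (∑ j ∈ Finset.range n, G j) / 2^n := by rw [Finset.sum_range_reflect]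
    _ = (k : ℝ) / 2^n := by rw [hGsum]

lemma isCompact_Phi2 : IsCompact (Phi2 '' Set.univ) := by
  show IsCompact ((fun A : Set ℕ => ∑' k, A.indicator c2 k) '' Set.univ)
  have h := range_sel c2 Function.injective_id
  simp only [Set.range_id] at h
  have h2 : {A : Set ℕ | A ⊆ Set.univ} = Set.univ := by
    ext A; simp
  rw [h2] at h
  rw [← h]
  exact isCompact_range_sel c2 summable_c2 c2_nonneg

lemma Icc_subset_Phi2 : Set.Icc (0:ℝ) 1 ⊆ Phi2 '' Set.univ := by
  have hclosed := isCompact_Phi2.isClosed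
  intro y hy
  rw [← hclosed.closure_eq, Metric.mem_closure_iff]
  intro δ hδ
  obtain ⟨n, hn⟩ := exists_pow_lt_of_lt_one hδ (by norm_num : (1/2 : ℝ) < 1)
  have h2n : (1:ℕ) ≤ 2^n := Nat.one_le_two_pow
  have h2nR : (0:ℝ) < 2^n := by positivity
  have hy0 : 0 ≤ y := hy.1
  have hy1 : y ≤ 1 := hy.2
  have hfl_le : ((⌊y * (2:ℝ)^n⌋₊ : ℕ) : ℝ) ≤ y * 2^n := Nat.floor_le (by positivity)
  have hlt : y * 2^n < ((⌊y * (2:ℝ)^n⌋₊ : ℕ) : ℝ) + 1 := Nat.lt_floor_add_one _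
  set m := ⌊y * (2:ℝ)^n⌋₊ with hm_def
  set k := min m (2^n - 1) with hk_def
  have hklt : k < 2^n := by omega
  refine ⟨(k:ℝ)/2^n, Phi2_dyadic n k hklt, ?_⟩
  rw [Real.dist_eq]
  have hhalf : (1/2:ℝ)^n * 2^n = 1 := by
    rw [div_pow, one_pow, div_mul_cancel₀]
    positivity
  have habs : |y - (k:ℝ)/2^n| ≤ (1/2)^n := by
    rcases le_or_gt m (2^n - 1) with hcase | hcase
    · have hkfl : k = m := min_eq_left hcase
      have hge : (0:ℝ) ≤ y - (m:ℝ)/2^n := by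
        rw [sub_nonneg, div_le_iff₀ h2nR]
        exact hfl_le
      have hle : y - (m:ℝ)/2^n ≤ (1/2)^n := by
        rw [← mul_le_mul_iff_of_pos_right h2nR]
        have heq : (y - (m:ℝ)/2^n) * 2^n = y * 2^n - m := by field_simp
        rw [heq, hhalf]
        linarith
      rw [hkfl, abs_of_nonneg hge]
      exact hle
    · have hkfl : k = 2^n - 1 := min_eq_right (by omega)
      have hflge : 2^n ≤ m := by omega
      have hy_ge : ((2:ℝ))^n ≤ y * 2^n := by
        calc ((2:ℝ))^n = ((2^n : ℕ) : ℝ) := by push_cast; ring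
          _ ≤ ((m : ℕ) : ℝ) := by exact_mod_cast hflge
          _ ≤ y * 2^n := hfl_le
      have hy_eq : y = 1 := le_antisymm hy1 (by nlinarith)
      have hkR : ((k:ℕ):ℝ) = 2^n - 1 := by
        rw [hkfl]
        push_cast [Nat.cast_sub h2n]
        ring
      rw [hy_eq, hkR]
      have heq1 : (1:ℝ) - (2^n - 1)/2^n = 1/2^n := by field_simp; ring
      rw [heq1, abs_of_nonneg (by positivity), one_div_pow]
  calc |y - (k:ℝ)/2^n| ≤ (1/2)^n := habs
    _ < δ := hn

noncomputable def fH : ℝ → ℝ := fun x =>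
  if h : ∃ A : Set ℕ, Phi3 A = x then Phi2 h.choose else 0

lemma fH_spec (A : Set ℕ) : fH (Phi3 A) = Phi2 A := by
  unfold fH
  have h : ∃ A' : Set ℕ, Phi3 A' = Phi3 A := ⟨A, rfl⟩
  rw [dif_pos h]
  congr 1
  exact phi3_inj h.choose_spec

lemma fH_holder : HolderOnWith 2 ⟨dd, dd_nonneg⟩ fH (Phi3 '' Set.univ) := by
  intro x hx y hy
  obtain ⟨A, -, rfl⟩ := hx
  obtain ⟨B, -, rfl⟩ := hy
  show edist (fH (Phi3 A)) (fH (Phi3 B))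
      ≤ ((2 : ℝ≥0) : ℝ≥0∞) * edist (Phi3 A) (Phi3 B) ^ (dd : ℝ)
  rw [fH_spec, fH_spec, edist_dist, edist_dist, Real.dist_eq, Real.dist_eq]
  have hkey := holder_key A B
  rcases eq_or_ne (Phi3 A) (Phi3 B) with heq | hne
  · have hAB : A = B := phi3_inj heq
    subst hAB
    simp
  · have habs : 0 < |Phi3 A - Phi3 B| := abs_pos.mpr (sub_ne_zero.mpr hne)
    calc ENNReal.ofReal |Phi2 A - Phi2 B|
        ≤ ENNReal.ofReal (2 * |Phi3 A - Phi3 B| ^ dd) := ENNReal.ofReal_le_ofReal hkey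
      _ = ENNReal.ofReal 2 * ENNReal.ofReal (|Phi3 A - Phi3 B| ^ dd) := by
          rw [ENNReal.ofReal_mul (by norm_num)]
      _ = ((2 : ℝ≥0) : ℝ≥0∞) * ENNReal.ofReal |Phi3 A - Phi3 B| ^ (dd : ℝ) := by
          rw [ENNReal.ofReal_rpow_of_pos habs]
          norm_num

lemma lower_bound : μH[dd] (Phi3 '' Set.univ) ≠ 0 := by
  intro h0
  have hr : (0 : ℝ≥0) < ⟨dd, dd_nonneg⟩ := by
    apply NNReal.coe_lt_coe.mp
    exact dd_pos
  have himg := fH_holder.hausdorffMeasure_image_le hr (zero_le_one (α := ℝ))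
  simp only [NNReal.coe_mk, mul_one] at himg
  change μH[1] _ ≤ _ * μH[dd] _ at himg
  rw [h0, mul_zero] at himg
  have himg_eq : fH '' (Phi3 '' Set.univ) = Phi2 '' Set.univ := by
    rw [Set.image_image]
    exact Set.image_congr fun A _ => fH_spec A
  have h1 : (1:ℝ≥0∞) ≤ μH[1] (fH '' (Phi3 '' Set.univ)) := by
    rw [himg_eq]
    calc (1:ℝ≥0∞) = μH[1] (Set.Icc (0:ℝ) 1) := by
          rw [MeasureTheory.hausdorffMeasure_real]
          simp [Real.volume_Icc]
      _ ≤ μH[1] (Phi2 '' Set.univ) := measure_mono Icc_subset_Phi2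
  exact one_ne_zero (le_antisymm (h1.trans himg) (zero_le (a := _)))

-- ### Part 2

lemma part2 : ¬ ∃ π : ℕ → ℕ, StrictMono π ∧
    μH[dd] (Set.range fun ε : ℕ → Bool =>
        ∑' n : ℕ, if ε n then (2 / 3 ^ (π n + 1) : ℝ) else 0)
      = μH[dd] (Set.range fun ε : ℕ → Bool =>
          ∑' n : ℕ, if ε n then (2 / 3 ^ (n + 1) : ℝ) else 0) / 3 := by
  rintro ⟨π, hπ, heq⟩
  rw [stmt_set_eq hπ.injective, stmt_set_eq_id] at heq
  have h0 : μH[dd] (Phi3 '' Set.univ) ≠ 0 := lower_bound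
  have htop : μH[dd] (Phi3 '' Set.univ) ≠ ⊤ :=
    ne_top_of_le_ne_top ENNReal.one_ne_top upper_bound
  by_cases hfin : (Set.range π)ᶜ.Finite
  · have hp1 := part1_phi hπ hfin
    have h23 : (2:ℝ≥0∞)⁻¹ ^ (Set.range π)ᶜ.ncard * μH[dd] (Phi3 '' Set.univ)
        = 3⁻¹ * μH[dd] (Phi3 '' Set.univ) := by
      rw [← hp1, heq, div_eq_mul_inv, mul_comm]
    have hKeq : (2:ℝ≥0∞)⁻¹ ^ (Set.range π)ᶜ.ncard = 3⁻¹ :=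
      (ENNReal.mul_left_inj h0 htop).mp h23
    have h2K : (2:ℝ≥0∞) ^ (Set.range π)ᶜ.ncard = 3 := by
      have hinv := congrArg (fun x : ℝ≥0∞ => x⁻¹) hKeq
      simpa [← ENNReal.inv_pow, inv_inv] using hinv
    have hnat : (2:ℕ) ^ (Set.range π)ᶜ.ncard = 3 := by
      have hcast : ((2 ^ (Set.range π)ᶜ.ncard : ℕ) : ℝ≥0∞) = ((3:ℕ) : ℝ≥0∞) := by
        push_cast
        exact h2K
      exact_mod_cast hcast
    rcases hK : (Set.range π)ᶜ.ncard with _ | K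
    · rw [hK] at hnat; simp at hnat
    · rw [hK] at hnat
      have hdvd : 2 ∣ 2 ^ (K+1) := dvd_pow_self 2 (Nat.succ_ne_zero K)
      omega
  · have hinf2 : (Set.range π)ᶜ.Infinite := hfin
    obtain ⟨t, htsub, htfin, htcard⟩ := hinf2.exists_subset_ncard_eq 2
    have hinfp : {m : ℕ | m ∉ t}.Infinite := by
      have h' := htfin.infinite_compl
      rwa [Set.compl_def] at h'
    set σ := Nat.nth (fun m => m ∉ t) with hσ_def
    have hσmono : StrictMono σ := Nat.nth_strictMono hinfp
    have hrange : Set.range σ = {m : ℕ | m ∉ t} := Nat.range_nth_of_infinite hinfp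
    have hcompl : (Set.range σ)ᶜ = t := by
      rw [hrange]
      ext m
      simp
    have hσfin : (Set.range σ)ᶜ.Finite := by rw [hcompl]; exact htfin
    have hσcard : (Set.range σ)ᶜ.ncard = 2 := by rw [hcompl]; exact htcard
    have hsub : Set.range π ⊆ Set.range σ := by
      rw [hrange]
      intro x hx hxt
      exact (htsub hxt) hx
    have hle : μH[dd] (Phi3 '' {A : Set ℕ | A ⊆ Set.range π})
        ≤ μH[dd] (Phi3 '' {A : Set ℕ | A ⊆ Set.range σ}) :=
      measure_mono (Set.image_mono fun A hA => hA.trans hsub)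
    rw [heq, part1_phi hσmono hσfin, hσcard] at hle
    have hfinR : (2:ℝ≥0∞)⁻¹ ^ 2 * μH[dd] (Phi3 '' Set.univ) ≠ ⊤ := by
      apply ENNReal.mul_ne_top _ htop
      simp
    have hto := ENNReal.toReal_mono hfinR hle
    rw [ENNReal.toReal_div, ENNReal.toReal_mul, ENNReal.toReal_pow, ENNReal.toReal_inv] at hto
    norm_num at hto
    have hb : 0 < (μH[dd] (Set.range Phi3)).toReal := by
      rw [← Set.image_univ]
      exact ENNReal.toReal_pos h0 htop
    linarith

end Stmt19

open MeasureTheory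
open scoped ENNReal


/-- Let `C` be the middle-thirds Cantor set realized as the set of subsums
of `sₙ = 2·3⁻⁽ⁿ⁺¹⁾`, and `d = ln 2 / ln 3`.  If `(tₙ) = (s_{π(n)})` is obtained from
`(sₙ)` by removing exactly `K` terms, then `ℋ^d(C_{t,𝒟}) = 2^{-K}·ℋ^d(C)`.
In particular no subsequence `(tₙ)` of `(sₙ)` satisfies `ℋ^d(C_{t,𝒟}) = ℋ^d(C)/3`. -/
theorem stmt_19 :
    (∀ (K : ℕ) (π : ℕ → ℕ), StrictMono π →
      (Set.range π)ᶜ.Finite → (Set.range π)ᶜ.ncard = K →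
      μH[Real.log 2 / Real.log 3]
          (Set.range fun ε : ℕ → Bool =>
            ∑' n : ℕ, if ε n then (2 / 3 ^ (π n + 1) : ℝ) else 0)
        = (2 : ℝ≥0∞)⁻¹ ^ K *
          μH[Real.log 2 / Real.log 3]
            (Set.range fun ε : ℕ → Bool =>
              ∑' n : ℕ, if ε n then (2 / 3 ^ (n + 1) : ℝ) else 0)) ∧
    ¬ ∃ π : ℕ → ℕ, StrictMono π ∧
      μH[Real.log 2 / Real.log 3]
          (Set.range fun ε : ℕ → Bool =>
            ∑' n : ℕ, if ε n then (2 / 3 ^ (π n + 1) : ℝ) else 0)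
        = μH[Real.log 2 / Real.log 3]
            (Set.range fun ε : ℕ → Bool =>
              ∑' n : ℕ, if ε n then (2 / 3 ^ (n + 1) : ℝ) else 0) / 3 := by
  constructor
  · intro K π h1 h2 h3
    exact Stmt19.part1 K π h1 h2 h3
  · exact Stmt19.part2
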